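/- arXiv:0808.4082 — 2 statements merged into one kernel-verified Lean document; each statement's English description precedes it below -/
import Mathlib

section
/- Let S = {A ∈ M_n(k) : A_{ij} ∈ p^{ν_{ij}}} with ν_{ii} = 0. Then S is an O-order in M_n(k) if and only if ν is reduced, i.e., every defining hyperplane x_i − x_j = ν_{ij} of the polytope C(ν) contains an integer point of C(ν). -/
noncomputable section

/-- The fractional ideal `p^ν = π^ν O` inside `k`. -/
def pset (O : Type*) [CommRing O] {k : Type*} [Field k] [Algebra O k] (π : k) (ν : ℤ) :
    Set k := {x : k | ∃ c : O, x = algebraMap O k c * π ^ ν}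

/-- An `O`-order in `M_n(k)`: a subalgebra which is finitely generated as an `O`-module
and is a full lattice (every matrix has a nonzero `O`-multiple in it). -/
def IsOrder (O : Type*) [CommRing O] {k : Type*} [Field k] [Algebra O k] {n : ℕ}
    (S : Subalgebra O (Matrix (Fin n) (Fin n) k)) : Prop :=
  (Subalgebra.toSubmodule S).FG ∧
    ∀ A : Matrix (Fin n) (Fin n) k, ∃ c : O, c ≠ 0 ∧ algebraMap O k c • A ∈ S

/-- A subset of `M_n(k)` is an `O`-order if it is the underlying set of an order. -/
def IsOrderSet (O : Type*) [CommRing O] {k : Type*} [Field k] [Algebra O k] {n : ℕ}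
    (s : Set (Matrix (Fin n) (Fin n) k)) : Prop :=
  ∃ S : Subalgebra O (Matrix (Fin n) (Fin n) k),
    (S : Set (Matrix (Fin n) (Fin n) k)) = s ∧ IsOrder O S

/-- The maximal order `Λ(m₁,…,m_n) = {A : A_{ij} ∈ p^{m_i - m_j}}`. -/
def Lam (O : Type*) [CommRing O] {k : Type*} [Field k] [Algebra O k] {n : ℕ} (π : k)
    (m : Fin n → ℤ) : Set (Matrix (Fin n) (Fin n) k) :=
  {A | ∀ i j, A i j ∈ pset O π (m i - m j)}

/-- A maximal `O`-order. -/
def IsMaximalOrder (O : Type*) [CommRing O] {k : Type*} [Field k] [Algebra O k] {n : ℕ}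
    (S : Subalgebra O (Matrix (Fin n) (Fin n) k)) : Prop :=
  IsOrder O S ∧ ∀ T : Subalgebra O (Matrix (Fin n) (Fin n) k), IsOrder O T → S ≤ T → T = S

/-- `m` is an integer point of the convex polytope `C(ν)` (in the hyperplane `x₁ = 0`). -/
def IntPt {n : ℕ} [NeZero n] (ν : Matrix (Fin n) (Fin n) ℤ) (m : Fin n → ℤ) : Prop :=
  m 0 = 0 ∧ ∀ i j, -ν j i ≤ m i - m j ∧ m i - m j ≤ ν i j

/-- `ν` is reduced: `C(ν)` contains an integer point and every bounding hyperplane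
`x_i - x_j = ν_{ij}` contains an integer point of `C(ν)`. -/
def Reduced {n : ℕ} [NeZero n] (ν : Matrix (Fin n) (Fin n) ℤ) : Prop :=
  (∃ m, IntPt ν m) ∧ ∀ i j, ∃ m, IntPt ν m ∧ m i - m j = ν i j



section helpers2

variable {O : Type*} [CommRing O] {k : Type*} [Field k] [Algebra O k]

lemma pset_eq_span (π : k) (ν : ℤ) :
    pset O π ν = (Submodule.span O {π ^ ν} : Submodule O k) := by
  ext x
  simp only [pset, Set.mem_setOf_eq, SetLike.mem_coe, Submodule.mem_span_singleton,
    Algebra.smul_def]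
  exact ⟨fun ⟨c, h⟩ => ⟨c, h.symm⟩, fun ⟨c, h⟩ => ⟨c, h.symm⟩⟩

lemma zpow_eq_algebraMap (ϖ : O) (π : k) (hπ : π = algebraMap O k ϖ) (e : ℕ) :
    π ^ (e : ℤ) = algebraMap O k (ϖ ^ e) := by
  rw [zpow_natCast, hπ, map_pow]

lemma pow_mem_pset (ϖ : O) (π : k) (hπ : π = algebraMap O k ϖ) (hπ0 : π ≠ 0)
    {a b : ℤ} (h : b ≤ a) : π ^ a ∈ pset O π b := by
  refine ⟨ϖ ^ (a - b).toNat, ?_⟩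
  rw [← zpow_eq_algebraMap ϖ π hπ, Int.toNat_of_nonneg (by omega), ← zpow_add₀ hπ0]
  ring_nf

lemma mul_pow_mem_pset (ϖ : O) (π : k) (hπ : π = algebraMap O k ϖ) (hπ0 : π ≠ 0)
    {a b : ℤ} (h : b ≤ a) (c : O) : algebraMap O k c * π ^ a ∈ pset O π b := by
  obtain ⟨d, hd⟩ := pow_mem_pset ϖ π hπ hπ0 h
  exact ⟨c * d, by rw [hd, map_mul]; ring⟩

lemma le_of_pow_mem_pset [IsDomain O] {ϖ : O} (hϖ : Irreducible ϖ) {π : k}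
    (hπ : π = algebraMap O k ϖ) [IsFractionRing O k]
    {a b : ℤ} (h : π ^ a ∈ pset O π b) : b ≤ a := by
  by_contra hab
  push_neg at hab
  obtain ⟨c, hc⟩ := h
  have hinj : Function.Injective (algebraMap O k) := IsFractionRing.injective O k
  have hπ0 : π ≠ 0 := by
    rw [hπ]; exact (map_ne_zero_iff _ hinj).mpr hϖ.ne_zero
  have key : algebraMap O k (c * ϖ ^ (b - a).toNat) = algebraMap O k 1 := by
    rw [map_mul, ← zpow_eq_algebraMap ϖ π hπ, Int.toNat_of_nonneg (by omega), map_one]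
    have hb : (π : k) ^ b ≠ 0 := zpow_ne_zero _ hπ0
    have hcc : algebraMap O k c = π ^ (a - b) := by
      rw [zpow_sub₀ hπ0, eq_div_iff hb]; exact hc.symm
    rw [hcc, ← zpow_add₀ hπ0]
    norm_num
  have hone : c * ϖ ^ (b - a).toNat = 1 := hinj key
  have : IsUnit ϖ := by
    have h1 : (b - a).toNat = (b - a).toNat - 1 + 1 := by omega
    exact IsUnit.of_mul_eq_one (a := ϖ) (ϖ ^ ((b - a).toNat - 1) * c) (by
      rw [← mul_assoc, ← pow_succ']
      rw [h1] at hone; linear_combination hone)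
  exact hϖ.not_isUnit this

variable {n : ℕ}

lemma gen_mem (ϖ : O) (π : k) (hπ : π = algebraMap O k ϖ) (hπ0 : π ≠ 0)
    (ν : Matrix (Fin n) (Fin n) ℤ) (i j : Fin n) :
    (π ^ ν i j • Matrix.single i j (1 : k)) ∈
      {A : Matrix (Fin n) (Fin n) k | ∀ a b, A a b ∈ pset O π (ν a b)} := by
  intro a b
  rw [Matrix.smul_single, smul_eq_mul, mul_one]
  by_cases hab : i = a ∧ j = b
  · obtain ⟨rfl, rfl⟩ := hab
    rw [Matrix.single_apply_same]
    exact pow_mem_pset ϖ π hπ hπ0 le_rfl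
  · rw [Matrix.single_apply_of_ne (h := hab)]
    exact ⟨0, by simp⟩

end helpers2

section main2

variable {n : ℕ} {O : Type*} [CommRing O] [IsDomain O]
  {k : Type*} [Field k] [Algebra O k] [IsFractionRing O k]

lemma entry_scale (ϖ : O) (π : k) (hπ : π = algebraMap O k ϖ) (hπ0 : π ≠ 0)
    (x : k) (e : ℤ) : ∃ c : O, c ≠ 0 ∧ algebraMap O k c * x ∈ pset O π e := by
  obtain ⟨⟨a, b⟩, hab⟩ := IsLocalization.surj (nonZeroDivisors O) x
  have hb0 : (b : O) ≠ 0 := nonZeroDivisors.ne_zero b.2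
  have hϖ0 : ϖ ≠ 0 := by
    intro h; rw [h, map_zero] at hπ; exact hπ0 hπ
  refine ⟨ϖ ^ e.toNat * b, mul_ne_zero (pow_ne_zero _ hϖ0) hb0, ?_⟩
  have : algebraMap O k (ϖ ^ e.toNat * ↑b) * x = algebraMap O k a * π ^ (e.toNat : ℤ) := by
    rw [map_mul, zpow_eq_algebraMap ϖ π hπ, mul_assoc, mul_comm (algebraMap O k ↑b) x, hab]
    ring
  rw [this]
  exact mul_pow_mem_pset ϖ π hπ hπ0 (Int.self_le_toNat e) a

lemma isOrderSet_of_triangle (ϖ : O) (π : k) (hπ : π = algebraMap O k ϖ) (hπ0 : π ≠ 0)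
    (ν : Matrix (Fin n) (Fin n) ℤ) (hdiag : ∀ i, ν i i = 0)
    (htri : ∀ i j l, ν i l ≤ ν i j + ν j l) :
    IsOrderSet O {A : Matrix (Fin n) (Fin n) k | ∀ i j, A i j ∈ pset O π (ν i j)} := by
  refine ⟨{
      carrier := {A : Matrix (Fin n) (Fin n) k | ∀ i j, A i j ∈ pset O π (ν i j)}
      zero_mem' := fun i j => ⟨0, by simp⟩
      add_mem' := by
        intro A B hA hB i j
        obtain ⟨c, hc⟩ := hA i j
        obtain ⟨d, hd⟩ := hB i j
        exact ⟨c + d, by rw [Matrix.add_apply, hc, hd, map_add]; ring⟩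
      one_mem' := by
        intro i j
        by_cases h : i = j
        · subst h
          exact ⟨1, by simp [Matrix.one_apply_eq, hdiag]⟩
        · exact ⟨0, by simp [Matrix.one_apply_ne h]⟩
      mul_mem' := by
        intro A B hA hB i l
        rw [pset_eq_span, SetLike.mem_coe, Matrix.mul_apply]
        refine Submodule.sum_mem _ fun j _ => ?_
        obtain ⟨c, hc⟩ := hA i j
        obtain ⟨d, hd⟩ := hB j l
        have h1 : A i j * B j l = algebraMap O k (c * d) * π ^ (ν i j + ν j l) := by
          rw [hc, hd, map_mul, zpow_add₀ hπ0]; ring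
        rw [h1]
        have h2 := mul_pow_mem_pset ϖ π hπ hπ0 (htri i j l) (c * d)
        rwa [pset_eq_span, SetLike.mem_coe] at h2
      algebraMap_mem' := by
        intro r i j
        rw [Matrix.algebraMap_matrix_apply]
        by_cases h : i = j
        · subst h
          exact ⟨r, by simp [hdiag]⟩
        · exact ⟨0, by simp [h]⟩ }, rfl, ?_, ?_⟩
  · rw [Submodule.fg_def]
    refine ⟨Set.range (fun p : Fin n × Fin n =>
      π ^ ν p.1 p.2 • Matrix.single p.1 p.2 (1 : k)), Set.finite_range _, ?_⟩
    apply le_antisymm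
    · rw [Submodule.span_le]
      rintro _ ⟨⟨i, j⟩, rfl⟩
      exact gen_mem ϖ π hπ hπ0 ν i j
    · intro A hA
      have hA' : ∀ i j, A i j ∈ pset O π (ν i j) := hA
      have hrep : A = ∑ i, ∑ j, Matrix.single i j (A i j) :=
        Matrix.matrix_eq_sum_single A
      rw [hrep]
      refine Submodule.sum_mem _ fun i _ => Submodule.sum_mem _ fun j _ => ?_
      obtain ⟨c, hc⟩ := hA' i j
      have hstd : Matrix.single i j (A i j) =
          c • (π ^ ν i j • Matrix.single i j (1 : k)) := by
        rw [Matrix.smul_single, Matrix.smul_single, smul_eq_mul, mul_one,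
          Algebra.smul_def, hc]
      rw [hstd]
      exact Submodule.smul_mem _ _ (Submodule.subset_span ⟨(i, j), rfl⟩)
  · intro A
    choose c hc0 hc using fun p : Fin n × Fin n =>
      entry_scale ϖ π hπ hπ0 (A p.1 p.2) (ν p.1 p.2)
    refine ⟨∏ p : Fin n × Fin n, c p,
      Finset.prod_ne_zero_iff.mpr (fun p _ => hc0 p), ?_⟩
    intro i j
    rw [Matrix.smul_apply, smul_eq_mul]
    have hsplit : (∏ p : Fin n × Fin n, c p) =
        c (i, j) * ∏ p ∈ Finset.univ.erase (i, j), c p :=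
      (Finset.mul_prod_erase _ _ (Finset.mem_univ _)).symm
    rw [hsplit, map_mul, mul_comm (algebraMap O k (c (i, j))), mul_assoc]
    obtain ⟨d, hd⟩ := hc (i, j)
    rw [hd]
    exact ⟨(∏ p ∈ Finset.univ.erase (i, j), c p) * d, by rw [map_mul]; ring⟩

lemma triangle_of_isOrderSet (ϖ : O) (hϖ : Irreducible ϖ) (π : k)
    (hπ : π = algebraMap O k ϖ) (ν : Matrix (Fin n) (Fin n) ℤ)
    (h : IsOrderSet O {A : Matrix (Fin n) (Fin n) k | ∀ i j, A i j ∈ pset O π (ν i j)}) :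
    ∀ i j l, ν i l ≤ ν i j + ν j l := by
  have hπ0 : π ≠ 0 := by
    rw [hπ]
    exact (map_ne_zero_iff _ (IsFractionRing.injective O k)).mpr hϖ.ne_zero
  obtain ⟨S, hS, _⟩ := h
  intro i j l
  have hg : ∀ a b : Fin n, (π ^ ν a b • Matrix.single a b (1 : k)) ∈ S := by
    intro a b
    rw [← SetLike.mem_coe, hS]
    exact gen_mem ϖ π hπ hπ0 ν a b
  have hm := S.mul_mem (hg i j) (hg j l)
  rw [← SetLike.mem_coe, hS] at hm
  have hmem := hm i l
  have hentry : ((π ^ ν i j • Matrix.single i j (1 : k)) *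
      (π ^ ν j l • Matrix.single j l (1 : k))) i l = π ^ (ν i j + ν j l) := by
    rw [Matrix.smul_mul, Matrix.mul_smul, Matrix.smul_apply, Matrix.smul_apply,
      Matrix.single_mul_single_same, Matrix.single_apply_same, mul_one,
      smul_eq_mul, smul_eq_mul, mul_one, zpow_add₀ hπ0]
  rw [hentry] at hmem
  exact le_of_pow_mem_pset hϖ hπ hmem

end main2

section main3

variable {n : ℕ} [NeZero n]

lemma reduced_of_triangle (ν : Matrix (Fin n) (Fin n) ℤ) (hdiag : ∀ i, ν i i = 0)
    (htri : ∀ i j l, ν i l ≤ ν i j + ν j l) : Reduced ν := by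
  constructor
  · refine ⟨fun i => ν i 0, by simp [hdiag], fun i j => ⟨?_, ?_⟩⟩
    · show -ν j i ≤ ν i 0 - ν j 0
      have := htri j i 0; omega
    · show ν i 0 - ν j 0 ≤ ν i j
      have := htri i j 0; omega
  · intro i j
    refine ⟨fun l => ν l j - ν 0 j, ⟨by ring, fun a b => ⟨?_, ?_⟩⟩,
      show (ν i j - ν 0 j) - (ν j j - ν 0 j) = ν i j by have := hdiag j; omega⟩
    · show -ν b a ≤ (ν a j - ν 0 j) - (ν b j - ν 0 j)
      have := htri b a j; omega
    · show (ν a j - ν 0 j) - (ν b j - ν 0 j) ≤ ν a b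
      have := htri a b j; omega

lemma triangle_of_reduced (ν : Matrix (Fin n) (Fin n) ℤ) (hred : Reduced ν) :
    ∀ i j l, ν i l ≤ ν i j + ν j l := by
  intro i j l
  obtain ⟨m, hm, heq⟩ := hred.2 i l
  have h1 := (hm.2 i j).2
  have h2 := (hm.2 j l).2
  omega

end main3


/-- `S = (p^{ν_{ij}})` is an `O`-order iff `ν` is reduced. -/
theorem stmt12 {n : ℕ} [NeZero n] {O : Type*} [CommRing O] [IsDomain O] [IsDiscreteValuationRing O]
{k : Type*} [Field k] [Algebra O k] [IsFractionRing O k]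
    (ϖ : O) (hϖ : Irreducible ϖ) (π : k) (hπ : π = algebraMap O k ϖ)
    (ν : Matrix (Fin n) (Fin n) ℤ) (hdiag : ∀ i, ν i i = 0)
    (hsym : ∀ i j, 0 ≤ ν i j + ν j i) :
    IsOrderSet O {A : Matrix (Fin n) (Fin n) k | ∀ i j, A i j ∈ pset O π (ν i j)} ↔
      Reduced ν := by
  have hπ0 : π ≠ 0 := by
    rw [hπ]
    exact (map_ne_zero_iff _ (IsFractionRing.injective O k)).mpr hϖ.ne_zero
  constructor
  · intro h
    exact reduced_of_triangle ν hdiag (triangle_of_isOrderSet ϖ hϖ π hπ ν h)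
  · intro h
    exact isOrderSet_of_triangle ϖ π hπ hπ0 ν hdiag (triangle_of_reduced ν h)
end
end

section
/- Let S = {A ∈ M_n(k) : A_{ij} ∈ p^{ν_{ij}}} with ν_{ii} = 0 and ν_{ij} + ν_{ji} ≥ 0 for all i,j. If S is contained in some maximal order Λ(m_1,…,m_n), then defining μ_{ij} = max over integer points m of C(ν) of (m_i − m_j), the set S̄ = {A : A_{ij} ∈ p^{μ_{ij}}} is an O-order containing S, and C(μ) and C(ν) have the same integer points. -/
noncomputable section

section Helpers

variable {O : Type*} [CommRing O] {k : Type*} [Field k] [Algebra O k] {π : k}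

lemma pset_zero (ν : ℤ) : (0 : k) ∈ pset O π ν := ⟨0, by simp⟩

lemma pset_add {ν : ℤ} {x y : k} (hx : x ∈ pset O π ν) (hy : y ∈ pset O π ν) :
    x + y ∈ pset O π ν := by
  obtain ⟨c, rfl⟩ := hx; obtain ⟨d, rfl⟩ := hy
  exact ⟨c + d, by rw [map_add]; ring⟩

lemma pset_mul (hπ0 : π ≠ 0) {a b : ℤ} {x y : k} (hx : x ∈ pset O π a) (hy : y ∈ pset O π b) :
    x * y ∈ pset O π (a + b) := by
  obtain ⟨c, rfl⟩ := hx; obtain ⟨d, rfl⟩ := hy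
  exact ⟨c * d, by rw [map_mul, zpow_add₀ hπ0]; ring⟩

lemma pset_sum {ι : Type*} (s : Finset ι) {ν : ℤ} {f : ι → k}
    (h : ∀ i ∈ s, f i ∈ pset O π ν) : (∑ i ∈ s, f i) ∈ pset O π ν := by
  classical
  induction s using Finset.induction with
  | empty => simpa using pset_zero ν
  | insert _ _ hx ih =>
    rw [Finset.sum_insert hx]
    exact pset_add (h _ (Finset.mem_insert_self _ _))
      (ih fun i hi => h i (Finset.mem_insert_of_mem hi))

lemma pset_mono (hπ0 : π ≠ 0) (ϖ : O) (hπ : π = algebraMap O k ϖ) {a b : ℤ} (hab : a ≤ b) :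
    pset O π b ⊆ pset O π a := by
  rintro x ⟨c, rfl⟩
  refine ⟨c * ϖ ^ (b - a).toNat, ?_⟩
  have h1 : ((b - a).toNat : ℤ) = b - a := Int.toNat_of_nonneg (by omega)
  rw [map_mul, map_pow, ← hπ, ← zpow_natCast π, h1]
  rw [mul_assoc, ← zpow_add₀ hπ0]
  ring_nf

end Helpers

/-- If `S = (p^{ν_{ij}})` is contained in some maximal order `Λ(m)`, then setting
`μ_{ij}` to be the maximum of `m_i - m_j` over integer points of `C(ν)`, the set
`S̄ = (p^{μ_{ij}})` is an `O`-order containing `S`, and `C(μ)` and `C(ν)` have the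
same integer points. -/
theorem stmt13 {n : ℕ} [NeZero n] {O : Type*} [CommRing O] [IsDomain O] [IsDiscreteValuationRing O]
{k : Type*} [Field k] [Algebra O k] [IsFractionRing O k]
    (ϖ : O) (hϖ : Irreducible ϖ) (π : k) (hπ : π = algebraMap O k ϖ)
    (ν : Matrix (Fin n) (Fin n) ℤ) (hdiag : ∀ i, ν i i = 0)
    (hsym : ∀ i j, 0 ≤ ν i j + ν j i)
    (hcont : ∃ m : Fin n → ℤ,
      {A : Matrix (Fin n) (Fin n) k | ∀ i j, A i j ∈ pset O π (ν i j)} ⊆ Lam O π m)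
    (μ : Matrix (Fin n) (Fin n) ℤ)
    (hμ : ∀ i j : Fin n,
      IsGreatest {d : ℤ | ∃ m : Fin n → ℤ, IntPt ν m ∧ d = m i - m j} (μ i j)) :
    IsOrderSet O {A : Matrix (Fin n) (Fin n) k | ∀ i j, A i j ∈ pset O π (μ i j)} ∧
    {A : Matrix (Fin n) (Fin n) k | ∀ i j, A i j ∈ pset O π (ν i j)} ⊆
      {A : Matrix (Fin n) (Fin n) k | ∀ i j, A i j ∈ pset O π (μ i j)} ∧
    (∀ m : Fin n → ℤ, IntPt μ m ↔ IntPt ν m) := by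
  classical
  have hinj := IsFractionRing.injective O k
  have hπ0 : π ≠ 0 := by
    rw [hπ]
    exact fun h => hϖ.ne_zero ((map_eq_zero_iff _ hinj).mp h)
  have hμmem : ∀ i j, ∃ m, IntPt ν m ∧ μ i j = m i - m j := fun i j => (hμ i j).1
  have hμub : ∀ i j (m : Fin n → ℤ), IntPt ν m → m i - m j ≤ μ i j :=
    fun i j m hm => (hμ i j).2 ⟨m, hm, rfl⟩
  have hμ0 : ∀ i, μ i i = 0 := fun i => by
    obtain ⟨m, _, h⟩ := hμmem i i; omega
  have hμle : ∀ i j, μ i j ≤ ν i j := fun i j => by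
    obtain ⟨m, hm, h⟩ := hμmem i j
    have := (hm.2 i j).2; omega
  have htri : ∀ i j l, μ i l ≤ μ i j + μ j l := fun i j l => by
    obtain ⟨m, hm, h⟩ := hμmem i l
    have h1 := hμub i j m hm; have h2 := hμub j l m hm; omega
  have hIff : ∀ m : Fin n → ℤ, IntPt μ m ↔ IntPt ν m := by
    intro m
    constructor
    · rintro ⟨h0, hb⟩
      refine ⟨h0, fun i j => ⟨?_, ?_⟩⟩
      · have := (hb i j).1; have := hμle j i; omega
      · have := (hb i j).2; have := hμle i j; omega
    · rintro ⟨h0, hb⟩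
      refine ⟨h0, fun i j => ⟨?_, hμub i j m ⟨h0, hb⟩⟩⟩
      have := hμub j i m ⟨h0, hb⟩; omega
  have hsub : {A : Matrix (Fin n) (Fin n) k | ∀ i j, A i j ∈ pset O π (ν i j)} ⊆
      {A : Matrix (Fin n) (Fin n) k | ∀ i j, A i j ∈ pset O π (μ i j)} :=
    fun A hA i j => pset_mono hπ0 ϖ hπ (hμle i j) (hA i j)
  refine ⟨?_, hsub, hIff⟩
  -- Build the subalgebra
  set Sbar : Set (Matrix (Fin n) (Fin n) k) :=
    {A | ∀ i j, A i j ∈ pset O π (μ i j)} with hSbar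
  have hmemSbar : ∀ A : Matrix (Fin n) (Fin n) k, A ∈ Sbar ↔ ∀ i j, A i j ∈ pset O π (μ i j) :=
    fun A => Iff.rfl
  refine ⟨{ carrier := Sbar
            add_mem' := fun {A B} hA hB i j => by
              have : (A + B) i j = A i j + B i j := rfl
              rw [this]; exact pset_add (hA i j) (hB i j)
            zero_mem' := fun i j => by
              have : (0 : Matrix (Fin n) (Fin n) k) i j = 0 := rfl
              rw [this]; exact pset_zero _
            mul_mem' := fun {A B} hA hB i j => by
              have : (A * B) i j = ∑ l, A i l * B l j := Matrix.mul_apply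
              rw [this]
              refine pset_sum Finset.univ fun l _ => ?_
              exact pset_mono hπ0 ϖ hπ (htri i l j) (pset_mul hπ0 (hA i l) (hB l j))
            one_mem' := fun i j => by
              by_cases h : i = j
              · subst h
                rw [Matrix.one_apply_eq, hμ0]
                exact ⟨1, by simp⟩
              · rw [Matrix.one_apply_ne h]
                exact pset_zero _
            algebraMap_mem' := fun c i j => by
              rw [Matrix.algebraMap_matrix_apply]
              by_cases h : i = j
              · subst h
                rw [if_pos rfl, hμ0]
                exact ⟨c, by simp⟩
              · rw [if_neg h]
                exact pset_zero _ }, rfl, ?_, ?_⟩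
  · -- finitely generated
    rw [Submodule.fg_def]
    refine ⟨Set.range (fun p : Fin n × Fin n =>
      π ^ (μ p.1 p.2) • Matrix.single p.1 p.2 (1 : k)), Set.finite_range _, ?_⟩
    apply le_antisymm
    · rw [Submodule.span_le]
      rintro _ ⟨⟨i, j⟩, rfl⟩
      intro i' j'
      show (π ^ (μ i j) • Matrix.single i j (1 : k)) i' j' ∈ pset O π (μ i' j')
      rw [Matrix.smul_apply, smul_eq_mul, Matrix.single]
      by_cases h : i = i' ∧ j = j'
      · obtain ⟨rfl, rfl⟩ := h
        simp only [Matrix.of_apply, if_pos (by exact ⟨rfl, rfl⟩ : i = i ∧ j = j), mul_one]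
        exact ⟨1, by simp⟩
      · simp only [Matrix.of_apply, if_neg h, mul_zero]
        exact pset_zero _
    · intro A hA
      have hrep : A = ∑ i : Fin n, ∑ j : Fin n, Matrix.single i j (A i j) :=
        Matrix.matrix_eq_sum_single A
      have hA' : ∀ i j, A i j ∈ pset O π (μ i j) := hA
      rw [hrep]
      refine Submodule.sum_mem _ fun i _ => Submodule.sum_mem _ fun j _ => ?_
      obtain ⟨c, hc⟩ := hA' i j
      have : Matrix.single i j (A i j)
          = c • (π ^ (μ i j) • Matrix.single i j (1 : k)) := by
        rw [hc]
        rw [Matrix.smul_single, Matrix.smul_single]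
        congr 1
        rw [smul_eq_mul, mul_one, Algebra.smul_def]
      rw [this]
      exact Submodule.smul_mem _ c (Submodule.subset_span ⟨(i, j), rfl⟩)
  · -- full lattice
    intro A
    obtain ⟨b, hb⟩ := IsLocalization.exist_integer_multiples (nonZeroDivisors O)
      (Finset.univ : Finset (Fin n × Fin n)) (fun p => A p.1 p.2)
    set N : ℕ := Finset.univ.sup (fun p : Fin n × Fin n => (μ p.1 p.2).toNat) with hN
    refine ⟨ϖ ^ N * (b : O), mul_ne_zero (pow_ne_zero _ hϖ.ne_zero)
      (nonZeroDivisors.ne_zero b.2), ?_⟩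
    intro i j
    obtain ⟨a, ha⟩ := hb (i, j) (Finset.mem_univ _)
    have hNij : μ i j ≤ (N : ℤ) := by
      have h1 : (μ i j).toNat ≤ N := Finset.le_sup (f := fun p : Fin n × Fin n => (μ p.1 p.2).toNat) (Finset.mem_univ (i, j))
      omega
    refine pset_mono hπ0 ϖ hπ hNij ⟨a, ?_⟩
    have hentry : (algebraMap O k (ϖ ^ N * (b : O)) • A) i j
        = algebraMap O k (ϖ ^ N) * (algebraMap O k (b : O) * A i j) := by
      rw [Matrix.smul_apply, smul_eq_mul, map_mul, mul_assoc]
    have hba : algebraMap O k (b : O) * A i j = algebraMap O k a := by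
      rw [Algebra.smul_def] at ha
      exact ha.symm
    rw [hentry, hba, hπ, zpow_natCast, ← map_pow]
    ring
end
end
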